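/- arXiv:0801.3047 — 3 statements merged into one kernel-verified Lean document; each statement's English description precedes it below -/
import Mathlib

section
/- (Proposition 1) Let H be a real inner product space and let x, y, z ∈ H be nonzero. Then the function d(x,y) = √(1 - ρ(x,y)²) satisfies the triangle inequality: d(x,z) ≤ d(x,y) + d(y,z). -/
open Real

set_option maxHeartbeats 1000000

/-- Key inequality for unit vectors. -/
lemma aux_unit_triangle {H : Type*} [NormedAddCommGroup H] [InnerProductSpace ℝ H]
    (u v w : H) (hu : ‖u‖ = 1) (hv : ‖v‖ = 1) (hw : ‖w‖ = 1) :
    Real.sqrt (1 - (inner ℝ u w : ℝ) ^ 2) ≤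
      Real.sqrt (1 - (inner ℝ u v : ℝ) ^ 2) + Real.sqrt (1 - (inner ℝ v w : ℝ) ^ 2) := by
  set p : ℝ := inner ℝ u v with hp
  set q : ℝ := inner ℝ v w with hq
  set r : ℝ := inner ℝ u w with hr
  have hp1 : |p| ≤ 1 := by
    have := abs_real_inner_le_norm u v
    rwa [hu, hv, one_mul] at this
  have hq1 : |q| ≤ 1 := by
    have := abs_real_inner_le_norm v w
    rwa [hv, hw, one_mul] at this
  have hr1 : |r| ≤ 1 := by
    have := abs_real_inner_le_norm u w
    rwa [hu, hw, one_mul] at this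
  have hpA : p ^ 2 ≤ 1 := by nlinarith [abs_nonneg p, sq_abs p]
  have hqA : q ^ 2 ≤ 1 := by nlinarith [abs_nonneg q, sq_abs q]
  have hrA : r ^ 2 ≤ 1 := by nlinarith [abs_nonneg r, sq_abs r]
  have huu : (inner ℝ u u : ℝ) = 1 := by
    rw [real_inner_self_eq_norm_sq, hu]; norm_num
  have hvv : (inner ℝ v v : ℝ) = 1 := by
    rw [real_inner_self_eq_norm_sq, hv]; norm_num
  have hww : (inner ℝ w w : ℝ) = 1 := by
    rw [real_inner_self_eq_norm_sq, hw]; norm_num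
  have hvu : (inner ℝ v u : ℝ) = p := by rw [real_inner_comm]
  have hwv : (inner ℝ w v : ℝ) = q := by rw [real_inner_comm]
  -- Cauchy–Schwarz applied to projections orthogonal to v
  have h1 : (inner ℝ (u - p • v) (w - q • v) : ℝ) = r - p * q := by
    simp only [inner_sub_left, inner_sub_right, real_inner_smul_left, real_inner_smul_right]
    rw [hvv, ← hp, ← hq, ← hr]; ring
  have h2 : (inner ℝ (u - p • v) (u - p • v) : ℝ) = 1 - p ^ 2 := by
    simp only [inner_sub_left, inner_sub_right, real_inner_smul_left, real_inner_smul_right]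
    rw [huu, hvv, hvu]; ring
  have h3 : (inner ℝ (w - q • v) (w - q • v) : ℝ) = 1 - q ^ 2 := by
    simp only [inner_sub_left, inner_sub_right, real_inner_smul_left, real_inner_smul_right]
    rw [hww, hvv, hwv]; ring
  have gram : (r - p * q) ^ 2 ≤ (1 - p ^ 2) * (1 - q ^ 2) := by
    have := real_inner_mul_inner_self_le (u - p • v) (w - q • v)
    rw [h1, h2, h3] at this
    linarith [this, sq_nonneg (r - p * q)]
  set sA := Real.sqrt (1 - p ^ 2) with hsA
  set sB := Real.sqrt (1 - q ^ 2) with hsB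
  have hsA0 : 0 ≤ sA := Real.sqrt_nonneg _
  have hsB0 : 0 ≤ sB := Real.sqrt_nonneg _
  have hsA2 : sA ^ 2 = 1 - p ^ 2 := Real.sq_sqrt (by linarith)
  have hsB2 : sB ^ 2 = 1 - q ^ 2 := Real.sq_sqrt (by linarith)
  have hs0 : 0 ≤ sA * sB := mul_nonneg hsA0 hsB0
  have hpq1 : |p * q| ≤ 1 := by
    rw [abs_mul]; exact mul_le_one₀ hp1 (abs_nonneg q) hq1
  clear_value p q r sA sB
  have epq : (p * q) ^ 2 = (1 - sA ^ 2) * (1 - sB ^ 2) := by rw [hsA2, hsB2]; ring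
  have gram' : (r - p * q) ^ 2 ≤ (sA * sB) ^ 2 := by
    rw [mul_pow, hsA2, hsB2]; exact gram
  have habs2 : |r - p * q| ≤ sA * sB := by
    calc |r - p * q| = Real.sqrt ((r - p * q) ^ 2) := (Real.sqrt_sq_eq_abs _).symm
      _ ≤ Real.sqrt ((sA * sB) ^ 2) := Real.sqrt_le_sqrt gram'
      _ = sA * sB := Real.sqrt_sq hs0
  obtain ⟨hrlow, hrhigh⟩ := abs_le.1 habs2
  have key : 1 - r ^ 2 ≤ (sA + sB) ^ 2 := by
    by_cases hc : p ^ 2 + q ^ 2 ≤ 1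
    · have expand : (sA + sB) ^ 2 = sA ^ 2 + 2 * (sA * sB) + sB ^ 2 := by ring
      have hr2 : 0 ≤ r ^ 2 := sq_nonneg r
      linarith
    · have hsabsq : (sA * sB) ^ 2 ≤ (p * q) ^ 2 := by
        rw [mul_pow, hsA2, hsB2]; nlinarith [hc]
      have hsab : sA * sB ≤ |p * q| := by
        calc sA * sB = Real.sqrt ((sA * sB) ^ 2) := (Real.sqrt_sq hs0).symm
          _ ≤ Real.sqrt ((p * q) ^ 2) := Real.sqrt_le_sqrt hsabsq
          _ = |p * q| := Real.sqrt_sq_eq_abs _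
      rcases le_or_gt 0 (p * q) with hm | hm
      · have habs : |p * q| = p * q := abs_of_nonneg hm
        rw [habs] at hsab
        have hle1 : p * q ≤ 1 := habs ▸ hpq1
        have h0 : 0 ≤ p * q - sA * sB := by linarith
        have hsq : (p * q - sA * sB) * (p * q - sA * sB) ≤ r * r :=
          mul_self_le_mul_self h0 (by linarith)
        have F3 : 0 ≤ (sA * sB) * (1 - p * q) := mul_nonneg hs0 (by linarith)
        linarith [hsq, epq, F3, sq_nonneg (sA * sB)]
      · have habs : |p * q| = -(p * q) := abs_of_neg hm
        rw [habs] at hsab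
        have hge1 : -1 ≤ p * q := by
          have h := neg_abs_le (p * q); linarith [hpq1]
        have h0 : 0 ≤ -(p * q + sA * sB) := by linarith
        have hsq : (-(p * q + sA * sB)) * (-(p * q + sA * sB)) ≤ (-r) * (-r) :=
          mul_self_le_mul_self h0 (by linarith)
        have F3 : 0 ≤ (sA * sB) * (1 + p * q) := mul_nonneg hs0 (by linarith)
        linarith [hsq, epq, F3, sq_nonneg (sA * sB)]
  calc Real.sqrt (1 - r ^ 2) ≤ Real.sqrt ((sA + sB) ^ 2) := Real.sqrt_le_sqrt key
    _ = sA + sB := Real.sqrt_sq (by positivity)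

/-- (Proposition 1) The function `d(x,y) = √(1 - ρ(x,y)²)` satisfies the
triangle inequality. -/
theorem sqrt_one_sub_corr_sq_triangle {H : Type*} [NormedAddCommGroup H]
    [InnerProductSpace ℝ H] (x y z : H) (hx : x ≠ 0) (hy : y ≠ 0) (hz : z ≠ 0)
    (ρ : H → H → ℝ) (hρ : ∀ a b, ρ a b = (inner ℝ a b : ℝ) / (‖a‖ * ‖b‖))
    (d : H → H → ℝ) (hd : ∀ a b, d a b = Real.sqrt (1 - (ρ a b) ^ 2)) :
    d x z ≤ d x y + d y z := by
  have hρ' : ∀ (a b : H), a ≠ 0 → b ≠ 0 →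
      ρ a b = (inner ℝ ((‖a‖⁻¹ : ℝ) • a) ((‖b‖⁻¹ : ℝ) • b) : ℝ) := by
    intro a b ha hb
    rw [hρ, real_inner_smul_left, real_inner_smul_right]
    have ha' : ‖a‖ ≠ 0 := norm_ne_zero_iff.2 ha
    have hb' : ‖b‖ ≠ 0 := norm_ne_zero_iff.2 hb
    field_simp
  rw [hd, hd, hd, hρ' x z hx hz, hρ' x y hx hy, hρ' y z hy hz]
  exact aux_unit_triangle _ _ _ (norm_smul_inv_norm hx) (norm_smul_inv_norm hy)
    (norm_smul_inv_norm hz)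
end

section
/- (Pointwise kernel of Proposition 2 of the appendix) Let H be a complex inner product space and let x, y, z ∈ H be nonzero. Then √(1 - C(x,z)) ≤ √(1 - C(x,y)) + √(1 - C(y,z)). (At each fixed frequency ω this is the inequality √(1 - C_{X_1X_3}(ω)) ≤ √(1 - C_{X_1X_2}(ω)) + √(1 - C_{X_2X_3}(ω)) obtained from the optimality of the Wiener filter, the Schwarz inequality for cross-spectra, and the bound C ≤ 1.) -/
lemma key_real (s t c c' R : ℝ) (hs : 0 ≤ s) (ht : 0 ≤ t)
    (hc : 0 ≤ c) (hc' : 0 ≤ c') (hc1 : c ≤ 1) (hc'1 : c' ≤ 1)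
    (hsc : s^2 = 1 - c^2) (htc : t^2 = 1 - c'^2)
    (hR0 : 0 ≤ R) (hR : c*c' - s*t ≤ R) :
    Real.sqrt (1 - R^2) ≤ s + t := by
  rcases le_or_gt 1 (s+t) with h | h
  · calc Real.sqrt (1 - R^2) ≤ Real.sqrt 1 :=
        Real.sqrt_le_sqrt (by nlinarith [sq_nonneg R])
    _ = 1 := Real.sqrt_one
    _ ≤ s + t := h
  · have h0 : 0 ≤ c*c' - s*t := by
      nlinarith [mul_nonneg hs ht, mul_nonneg hc hc', sq_nonneg (c*c' - s*t), sq_nonneg (c*c' + s*t)]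
    have h1 : 1 - R^2 ≤ (s+t)^2 := by
      nlinarith [mul_nonneg hs ht, mul_nonneg hc hc', sq_nonneg (c*c' - s*t), sq_nonneg R, mul_le_one₀ hc1 hc' hc'1]
    calc Real.sqrt (1 - R^2) ≤ Real.sqrt ((s+t)^2) := Real.sqrt_le_sqrt h1
    _ = s + t := Real.sqrt_sq (by linarith)

lemma inner_proj_sub {H : Type*} [NormedAddCommGroup H] [InnerProductSpace ℂ H]
    (y : H) (hy : y ≠ 0) (a b : H) :
    (inner ℂ (a - ((inner ℂ y a : ℂ)/(‖y‖^2:ℂ)) • y) (b - ((inner ℂ y b : ℂ)/(‖y‖^2:ℂ)) • y) : ℂ)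
      = inner ℂ a b - (inner ℂ a y : ℂ) * (inner ℂ y b : ℂ) / (‖y‖^2:ℂ) := by
  have hY : (‖y‖:ℂ) ≠ 0 := by exact_mod_cast (norm_ne_zero_iff.mpr hy)
  simp only [inner_sub_left, inner_sub_right, inner_smul_left, inner_smul_right,
    inner_self_eq_norm_sq_to_K, map_div₀, map_pow, Complex.conj_ofReal, inner_conj_symm]
  field_simp
  simp

lemma norm_proj_sub_sq {H : Type*} [NormedAddCommGroup H] [InnerProductSpace ℂ H]
    (y : H) (hy : y ≠ 0) (a : H) :
    ‖a - ((inner ℂ y a : ℂ)/(‖y‖^2:ℂ)) • y‖^2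
      = ‖a‖^2 - ‖(inner ℂ a y : ℂ)‖^2 / ‖y‖^2 := by
  have h := inner_proj_sub y hy a a
  have h2 : (‖a - ((inner ℂ y a : ℂ)/(‖y‖^2:ℂ)) • y‖:ℝ)^2
      = Complex.re (inner ℂ (a - ((inner ℂ y a : ℂ)/(‖y‖^2:ℂ)) • y)
          (a - ((inner ℂ y a : ℂ)/(‖y‖^2:ℂ)) • y) : ℂ) := by
    rw [inner_self_eq_norm_sq_to_K]
    simp [← Complex.ofReal_pow]
  rw [h2, h]
  have h3 : (inner ℂ a y : ℂ) * (inner ℂ y a : ℂ) = ((‖(inner ℂ a y : ℂ)‖^2 : ℝ) : ℂ) := by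
    rw [← inner_conj_symm a y, mul_comm, Complex.mul_conj']
    simp
    rw [← inner_conj_symm y a, Complex.norm_conj]
  rw [h3, inner_self_eq_norm_sq_to_K]
  rw [show ((‖(inner ℂ a y : ℂ)‖^2 : ℝ) : ℂ) / (‖y‖^2:ℂ) = (((‖(inner ℂ a y : ℂ)‖^2 / ‖y‖^2 : ℝ)) : ℂ) by push_cast; ring]
  simp [← Complex.ofReal_pow]

/-- (Pointwise kernel of Proposition 2 of the appendix) The frequency-pointwise
distance `√(1 - C)` built from the coherence satisfies the triangle
inequality. -/
theorem sqrt_one_sub_coherence_triangle {H : Type*} [NormedAddCommGroup H]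
    [InnerProductSpace ℂ H] (x y z : H) (hx : x ≠ 0) (hy : y ≠ 0) (hz : z ≠ 0)
    (C : H → H → ℝ)
    (hC : ∀ a b, C a b = ‖(inner ℂ a b : ℂ)‖ ^ 2 / (‖a‖ ^ 2 * ‖b‖ ^ 2)) :
    Real.sqrt (1 - C x z) ≤ Real.sqrt (1 - C x y) + Real.sqrt (1 - C y z) := by
  have hX : (0:ℝ) < ‖x‖ := norm_pos_iff.mpr hx
  have hY : (0:ℝ) < ‖y‖ := norm_pos_iff.mpr hy
  have hZ : (0:ℝ) < ‖z‖ := norm_pos_iff.mpr hz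
  set p := ‖(inner ℂ x y : ℂ)‖ with hp
  set q := ‖(inner ℂ y z : ℂ)‖ with hq
  set r := ‖(inner ℂ x z : ℂ)‖ with hr
  have hpCS : p ≤ ‖x‖ * ‖y‖ := norm_inner_le_norm x y
  have hqCS : q ≤ ‖y‖ * ‖z‖ := norm_inner_le_norm y z
  set c := p / (‖x‖ * ‖y‖) with hcdef
  set c' := q / (‖y‖ * ‖z‖) with hc'def
  set R := r / (‖x‖ * ‖z‖) with hRdef
  have hc0 : 0 ≤ c := div_nonneg (norm_nonneg _) (by positivity)
  have hc'0 : 0 ≤ c' := div_nonneg (norm_nonneg _) (by positivity)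
  have hR0 : 0 ≤ R := div_nonneg (norm_nonneg _) (by positivity)
  have hc1 : c ≤ 1 := (div_le_one (by positivity)).mpr hpCS
  have hc'1 : c' ≤ 1 := (div_le_one (by positivity)).mpr hqCS
  -- rewrite coherences in terms of c, c', R
  have hCxy : C x y = c^2 := by rw [hC, hcdef, div_pow, hp]; ring_nf
  have hCyz : C y z = c'^2 := by rw [hC, hc'def, div_pow, hq]; ring_nf
  have hCxz : C x z = R^2 := by rw [hC, hRdef, div_pow, hr]; ring_nf
  set s := Real.sqrt (1 - C x y) with hsdef
  set t := Real.sqrt (1 - C y z) with htdef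
  have hs : 0 ≤ s := Real.sqrt_nonneg _
  have ht : 0 ≤ t := Real.sqrt_nonneg _
  have hsc : s^2 = 1 - c^2 := by
    rw [hsdef, Real.sq_sqrt (by nlinarith), hCxy]
  have htc : t^2 = 1 - c'^2 := by
    rw [htdef, Real.sq_sqrt (by nlinarith), hCyz]
  -- the geometric inequality
  set u := x - ((inner ℂ y x : ℂ)/(‖y‖^2:ℂ)) • y with hu
  set w := z - ((inner ℂ y z : ℂ)/(‖y‖^2:ℂ)) • y with hw
  have hu2 : ‖u‖^2 = ‖x‖^2 - p^2/‖y‖^2 := norm_proj_sub_sq y hy x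
  have hw2 : ‖w‖^2 = ‖z‖^2 - q^2/‖y‖^2 := by
    have h := norm_proj_sub_sq y hy z
    have hqz : ‖(inner ℂ z y : ℂ)‖ = q := by
      calc ‖(inner ℂ z y : ℂ)‖ = ‖(starRingEnd ℂ) (inner ℂ z y : ℂ)‖ := (norm_star _).symm
      _ = ‖(inner ℂ y z : ℂ)‖ := by rw [inner_conj_symm]
      _ = q := hq.symm
    rwa [hqz] at h
  have huxs : ‖u‖ = ‖x‖ * s := by
    have h1 : ‖u‖^2 = (‖x‖ * s)^2 := by
      rw [hu2, mul_pow, hsc, hcdef]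
      field_simp
    calc ‖u‖ = Real.sqrt (‖u‖^2) := (Real.sqrt_sq (norm_nonneg _)).symm
    _ = Real.sqrt ((‖x‖*s)^2) := by rw [h1]
    _ = ‖x‖ * s := Real.sqrt_sq (by positivity)
  have hwzt : ‖w‖ = ‖z‖ * t := by
    have h1 : ‖w‖^2 = (‖z‖ * t)^2 := by
      rw [hw2, mul_pow, htc, hc'def]
      field_simp
    calc ‖w‖ = Real.sqrt (‖w‖^2) := (Real.sqrt_sq (norm_nonneg _)).symm
    _ = Real.sqrt ((‖z‖*t)^2) := by rw [h1]
    _ = ‖z‖ * t := Real.sqrt_sq (by positivity)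
  have hiuw : (inner ℂ u w : ℂ) = inner ℂ x z - (inner ℂ x y : ℂ) * (inner ℂ y z : ℂ) / (‖y‖^2:ℂ) :=
    inner_proj_sub y hy x z
  have hkey : p * q / ‖y‖^2 ≤ r + ‖u‖ * ‖w‖ := by
    have h1 : ‖(inner ℂ x y : ℂ) * (inner ℂ y z : ℂ) / (‖y‖^2:ℂ)‖ = p * q / ‖y‖^2 := by
      rw [norm_div, norm_mul]
      simp [hp, hq]
    have h2 : ‖(inner ℂ x y : ℂ) * (inner ℂ y z : ℂ) / (‖y‖^2:ℂ)‖
        ≤ ‖(inner ℂ x z : ℂ)‖ + ‖(inner ℂ u w : ℂ)‖ := by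
      calc ‖(inner ℂ x y : ℂ) * (inner ℂ y z : ℂ) / (‖y‖^2:ℂ)‖
          = ‖(inner ℂ x z : ℂ) - (inner ℂ u w : ℂ)‖ := by rw [hiuw]; ring_nf
      _ ≤ ‖(inner ℂ x z : ℂ)‖ + ‖(inner ℂ u w : ℂ)‖ := norm_sub_le _ _
    have h3 : ‖(inner ℂ u w : ℂ)‖ ≤ ‖u‖ * ‖w‖ := norm_inner_le_norm u w
    rw [h1] at h2
    linarith
  have hR : c*c' - s*t ≤ R := by
    rw [huxs, hwzt] at hkey
    have e1 : c * c' - s * t = (p*q/‖y‖^2 - (‖x‖*s)*(‖z‖*t)) / (‖x‖*‖z‖) := by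
      rw [hcdef, hc'def]; field_simp
    rw [e1, hRdef]
    exact (div_le_div_iff_of_pos_right (by positivity)).mpr (by linarith)

  have := key_real s t c c' R hs ht hc0 hc'0 hc1 hc'1 hsc htc hR0 hR
  rw [hCxz]
  exact this
end

section
/- (Proposition 3 of the appendix, equal weights on cycles) Let V be a finite type, d : V → V → ℝ a symmetric weight function (d i j = d j i), and m : V → V a nearest-neighbor selection, i.e. m j ≠ j and d j (m j) ≤ d j i for every i ≠ j. Let G be the simple graph on V whose edge set is A = {⟦(j, m j)⟧ : j ∈ V}. If n_0, n_1, …, n_{k-1} (k ≥ 3, all distinct) is a cycle in G, i.e. ⟦(n_i, n_{i+1 mod k})⟧ ∈ A for every i, then all the weights d n_i n_{i+1 mod k} along the cycle are equal. -/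
/-- (Proposition 3 of the appendix, equal weights on cycles) If the graph
produced by the nearest-neighbor clusterization algorithm contains a cycle
`n 0, n 1, …, n (k-1)` (all vertices distinct, `k ≥ 3`, consecutive pairs
taken mod `k` being arcs of `A = {⟦(j, m j)⟧ : j}`), then all the weights
along the cycle are equal. -/
theorem clusterization_cycle_equal_weights {V : Type*} [Fintype V]
    (d : V → V → ℝ) (hsymm : ∀ i j, d i j = d j i)
    (m : V → V) (hm : ∀ j, m j ≠ j)
    (hmin : ∀ j i, i ≠ j → d j (m j) ≤ d j i)
    (k : ℕ) (hk : 3 ≤ k) (n : ℕ → V)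
    (hinj : ∀ i j, i < k → j < k → n i = n j → i = j)
    (hcycle : ∀ i, i < k → ∃ j : V, s(n i, n ((i + 1) % k)) = s(j, m j)) :
    ∀ i i', i < k → i' < k →
      d (n i) (n ((i + 1) % k)) = d (n i') (n ((i' + 1) % k)) := by
  haveI : NeZero k := ⟨by omega⟩
  haveI : Fact (1 < k) := ⟨by omega⟩
  set N : ZMod k → V := fun x => n x.val with hN
  have hNinj : Function.Injective N := fun x y h =>
    ZMod.val_injective k (hinj x.val y.val (ZMod.val_lt x) (ZMod.val_lt y) h)
  have hvaladd : ∀ x : ZMod k, (x + 1).val = (x.val + 1) % k := fun x => by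
    rw [ZMod.val_add, ZMod.val_one]
  -- simple non-equalities in ZMod k
  have h1ne : (1 : ZMod k) ≠ 0 := by
    intro h
    have := congrArg ZMod.val h
    rw [ZMod.val_one, ZMod.val_zero] at this
    omega
  have h2ne : (2 : ZMod k) ≠ 0 := by
    have h2 : (2 : ZMod k) = ((2 : ℕ) : ZMod k) := by push_cast; ring
    rw [h2, Ne, ZMod.natCast_eq_zero_iff]
    intro h
    have := Nat.le_of_dvd (by omega) h
    omega
  have hxs : ∀ x : ZMod k, x + 1 ≠ x := by
    intro x h
    apply h1ne
    have : x + 1 - x = x - x := by rw [h]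
    simpa using this
  have hxs2 : ∀ x : ZMod k, x + 2 ≠ x := by
    intro x h
    apply h2ne
    have : x + 2 - x = x - x := by rw [h]
    simpa using this
  -- each consecutive pair is an edge of A, in one of two orientations
  have hedge : ∀ x : ZMod k, m (N x) = N (x + 1) ∨ m (N (x + 1)) = N x := by
    intro x
    obtain ⟨j, hj⟩ := hcycle x.val (ZMod.val_lt x)
    have hx1 : n ((x.val + 1) % k) = N (x + 1) := by rw [hN]; simp [hvaladd]
    rw [hx1] at hj
    rw [Sym2.eq_iff] at hj
    rcases hj with ⟨h1, h2⟩ | ⟨h1, h2⟩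
    · left; rw [show N x = j from h1]; exact h2.symm
    · right; rw [show N (x + 1) = j from h2]; exact (show N x = m j from h1).symm
  -- the weight function along the cycle
  set w : ZMod k → ℝ := fun x => d (N x) (N (x + 1)) with hw
  -- a forward edge forces its weight ≤ previous weight
  have hfw : ∀ x : ZMod k, m (N x) = N (x + 1) → w x ≤ w (x - 1) := by
    intro x hx
    have hne : N (x - 1) ≠ N x := by
      intro h
      have h2 : x - 1 = x := hNinj h
      have h3 : x - 1 + 1 = x + 1 := by rw [h2]
      have h4 : x = x + 1 := by rw [← h3]; ring
      exact hxs x h4.symm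
    have e1 : x - 1 + 1 = x := by ring
    calc w x = d (N x) (m (N x)) := by simp only [hw, hx]
      _ ≤ d (N x) (N (x - 1)) := hmin _ _ hne
      _ = d (N (x - 1)) (N (x - 1 + 1)) := by rw [hsymm, e1]
      _ = w (x - 1) := rfl
  -- a backward edge forces its weight ≤ next weight
  have hbw : ∀ x : ZMod k, m (N (x + 1)) = N x → w x ≤ w (x + 1) := by
    intro x hx
    have hne : N (x + 1 + 1) ≠ N (x + 1) := fun h => hxs (x + 1) (hNinj h)
    calc w x = d (N (x + 1)) (m (N (x + 1))) := by simp only [hw, hx]; rw [hsymm]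
      _ ≤ d (N (x + 1)) (N (x + 1 + 1)) := hmin _ _ hne
      _ = w (x + 1) := rfl
  -- orientation propagates backwards around the cycle
  have hprop : ∀ x : ZMod k, m (N (x + 1)) = N (x + 1 + 1) → m (N x) = N (x + 1) := by
    intro x hx
    rcases hedge x with h | h
    · exact h
    · exfalso
      have hxy : N x = N (x + 1 + 1) := by rw [← hx, h]
      have h2 : x = x + 1 + 1 := hNinj hxy
      exact hxs2 x (by rw [show x + 2 = x + 1 + 1 by ring, ← h2])
  -- transport a predicate around the cycle by repeated subtraction of 1
  have hsub : ∀ P : ZMod k → Prop, (∀ x, P x → P (x - 1)) → ∀ x, P x → ∀ y, P y := by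
    intro P hstep x hx y
    have key : ∀ t : ℕ, P (x - t) := by
      intro t
      induction t with
      | zero => simpa using hx
      | succ t ih =>
        have h := hstep _ ih
        have e : x - (t : ZMod k) - 1 = x - ((t + 1 : ℕ) : ZMod k) := by push_cast; ring
        rwa [e] at h
    have h := key (x - y).val
    rwa [ZMod.natCast_val, ZMod.cast_id, sub_sub_cancel] at h
  -- transport by repeated addition of 1
  have hadd : ∀ P : ZMod k → Prop, (∀ x, P x → P (x + 1)) → ∀ x, P x → ∀ y, P y := by
    intro P hstep x hx y
    have key : ∀ t : ℕ, P (x + t) := by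
      intro t
      induction t with
      | zero => simpa using hx
      | succ t ih =>
        have h := hstep _ ih
        have e : x + (t : ZMod k) + 1 = x + ((t + 1 : ℕ) : ZMod k) := by push_cast; ring
        rwa [e] at h
    have h := key (y - x).val
    rwa [ZMod.natCast_val, ZMod.cast_id, add_sub_cancel] at h
  -- the weights are constant around the cycle
  have hWconst : ∀ x y : ZMod k, w x = w y := by
    by_cases hF : ∃ x0 : ZMod k, m (N x0) = N (x0 + 1)
    · obtain ⟨x0, hx0⟩ := hF
      have hall : ∀ x, m (N x) = N (x + 1) := by
        refine hsub (fun x => m (N x) = N (x + 1)) (fun x fx => ?_) x0 hx0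
        apply hprop (x - 1)
        have e1 : x - 1 + 1 = x := by ring
        rw [e1]; exact fx
      have hdec : ∀ x, w x ≤ w (x - 1) := fun x => hfw x (hall x)
      have h1 : ∀ a b, w a ≤ w b := fun a b =>
        hsub (fun z => w a ≤ w z) (fun z hz => le_trans hz (hdec z)) a le_rfl b
      exact fun x y => le_antisymm (h1 x y) (h1 y x)
    · push_neg at hF
      have hall : ∀ x, m (N (x + 1)) = N x := fun x => (hedge x).resolve_left (hF x)
      have hinc : ∀ x, w x ≤ w (x + 1) := fun x => hbw x (hall x)
      have h1 : ∀ a b, w a ≤ w b := fun a b =>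
        hadd (fun z => w a ≤ w z) (fun z hz => le_trans hz (hinc z)) a le_rfl b
      exact fun x y => le_antisymm (h1 x y) (h1 y x)
  -- translate back to natural-number indices
  intro i i' hi hi'
  have key : ∀ j, j < k → d (n j) (n ((j + 1) % k)) = w (j : ZMod k) := by
    intro j hj
    have hv : ((j : ℕ) : ZMod k).val = j := ZMod.val_natCast_of_lt hj
    rw [hw]
    simp only [hN]
    rw [hvaladd, hv]
  rw [key i hi, key i' hi']
  exact hWconst _ _
end
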